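/- For all real n > 3 and all real x with 2π/(n+1) ≤ x < π/2, we have (n/2)·log(1 - sin²x) < log(1 - sin x). -/

import Mathlib

open Real

private lemma cubic_pos {t : ℝ} (h0 : 0 < t) (h1 : t < 1) :
    0 < 1 - 3*t + 2*t^2 + t^3 := by
  nlinarith [mul_pos (mul_pos h0 h0) h0, sq_nonneg (2*t - 1), sq_nonneg (4*t - 3),
    mul_nonneg (sq_nonneg (4*t - 3)) h0.le,
    mul_nonneg (sq_nonneg (2*t - 1)) (by linarith : (0:ℝ) ≤ 1 - t)]

private lemma hasDerivAt_H (t : ℝ) (ht : t ∈ Set.Ioo (-1:ℝ) 1) :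
    HasDerivAt (fun u : ℝ => (4 - 3*u) * Real.log (1 - u) + (4 - u) * Real.log (1 + u))
      (-3 * Real.log (1 - t) - (4 - 3*t)/(1 - t) - Real.log (1 + t) + (4 - t)/(1 + t)) t := by
  obtain ⟨ht1, ht2⟩ := ht
  have h1 : (1:ℝ) - t ≠ 0 := by linarith
  have h2 : (1:ℝ) + t ≠ 0 := by linarith
  have d1 : HasDerivAt (fun u : ℝ => 1 - u) (-1) t := (hasDerivAt_id t).const_sub 1
  have d2 : HasDerivAt (fun u : ℝ => 1 + u) 1 t := (hasDerivAt_id t).const_add 1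
  have dl1 : HasDerivAt (fun u : ℝ => Real.log (1 - u)) ((-1)/(1 - t)) t := d1.log h1
  have dl2 : HasDerivAt (fun u : ℝ => Real.log (1 + u)) (1/(1 + t)) t := d2.log h2
  have da : HasDerivAt (fun u : ℝ => 4 - 3*u) (-3) t := by
    simpa using ((hasDerivAt_id t).const_mul 3).const_sub 4
  have db : HasDerivAt (fun u : ℝ => 4 - u) (-1) t := (hasDerivAt_id t).const_sub 4
  have := (da.mul dl1).add (db.mul dl2)
  refine this.congr_deriv ?_
  field_simp
  ring

private lemma hasDerivAt_H1 (t : ℝ) (ht : t ∈ Set.Ioo (-1:ℝ) 1) :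
    HasDerivAt (fun u : ℝ =>
      -3 * Real.log (1 - u) - (4 - 3*u)/(1 - u) - Real.log (1 + u) + (4 - u)/(1 + u))
      ((2 - 3*t)/(1 - t)^2 - (6 + t)/(1 + t)^2) t := by
  obtain ⟨ht1, ht2⟩ := ht
  have h1 : (1:ℝ) - t ≠ 0 := by linarith
  have h2 : (1:ℝ) + t ≠ 0 := by linarith
  have d1 : HasDerivAt (fun u : ℝ => 1 - u) (-1) t := (hasDerivAt_id t).const_sub 1
  have d2 : HasDerivAt (fun u : ℝ => 1 + u) 1 t := (hasDerivAt_id t).const_add 1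
  have dl1 : HasDerivAt (fun u : ℝ => Real.log (1 - u)) ((-1)/(1 - t)) t := d1.log h1
  have dl2 : HasDerivAt (fun u : ℝ => Real.log (1 + u)) (1/(1 + t)) t := d2.log h2
  have da : HasDerivAt (fun u : ℝ => 4 - 3*u) (-3) t := by
    simpa using ((hasDerivAt_id t).const_mul 3).const_sub 4
  have db : HasDerivAt (fun u : ℝ => 4 - u) (-1) t := (hasDerivAt_id t).const_sub 4
  have dq1 : HasDerivAt (fun u : ℝ => (4 - 3*u)/(1 - u))
      (((-3) * (1 - t) - (4 - 3*t) * (-1)) / (1 - t)^2) t := da.div d1 h1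
  have dq2 : HasDerivAt (fun u : ℝ => (4 - u)/(1 + u))
      (((-1) * (1 + t) - (4 - t) * 1) / (1 + t)^2) t := db.div d2 h2
  have := (((dl1.const_mul (-3)).sub dq1).sub dl2).add dq2
  refine this.congr_deriv ?_
  field_simp
  ring

private lemma key_h {s : ℝ} (h0 : 0 < s) (h1 : s < 1) :
    (4 - 3*s) * Real.log (1 - s) + (4 - s) * Real.log (1 + s) < 0 := by
  set H : ℝ → ℝ := fun u => (4 - 3*u) * Real.log (1 - u) + (4 - u) * Real.log (1 + u) with hH
  set H1 : ℝ → ℝ := fun u =>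
      -3 * Real.log (1 - u) - (4 - 3*u)/(1 - u) - Real.log (1 + u) + (4 - u)/(1 + u) with hH1
  have hsub : Set.Ico (0:ℝ) 1 ⊆ Set.Ioo (-1:ℝ) 1 := fun t ht => ⟨by linarith [ht.1], ht.2⟩
  -- H1 is strictly decreasing on [0,1)
  have antiH1 : StrictAntiOn H1 (Set.Ico (0:ℝ) 1) := by
    apply strictAntiOn_of_deriv_neg (convex_Ico 0 1)
    · exact fun t ht => (hasDerivAt_H1 t (hsub ht)).continuousAt.continuousWithinAt
    · intro t ht
      rw [interior_Ico] at ht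
      obtain ⟨ht0, ht1⟩ := ht
      rw [(hasDerivAt_H1 t (hsub ⟨ht0.le, ht1⟩)).deriv]
      have p1 : (0:ℝ) < (1 - t)^2 := pow_pos (by linarith) 2
      have p2 : (0:ℝ) < (1 + t)^2 := pow_pos (by linarith) 2
      rw [sub_neg, div_lt_div_iff₀ p1 p2]
      nlinarith [cubic_pos ht0 ht1]
  -- hence H1 < 0 on (0,1)
  have hH1neg : ∀ t ∈ Set.Ioo (0:ℝ) 1, H1 t < 0 := by
    intro t ht
    have := antiH1 (by constructor <;> norm_num) ⟨ht.1.le, ht.2⟩ ht.1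
    have h10 : H1 0 = 0 := by simp [hH1]
    linarith [h10 ▸ this]
  -- H is strictly decreasing on [0,1)
  have antiH : StrictAntiOn H (Set.Ico (0:ℝ) 1) := by
    apply strictAntiOn_of_deriv_neg (convex_Ico 0 1)
    · exact fun t ht => (hasDerivAt_H t (hsub ht)).continuousAt.continuousWithinAt
    · intro t ht
      rw [interior_Ico] at ht
      rw [(hasDerivAt_H t (hsub ⟨ht.1.le, ht.2⟩)).deriv]
      exact hH1neg t ht
  have := antiH (by constructor <;> norm_num) ⟨h0.le, h1⟩ h0
  have hH0 : H 0 = 0 := by simp [hH]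
  have : H s < 0 := by linarith [hH0 ▸ this]
  simpa [hH] using this

theorem stmt8 (n x : ℝ) (hn : 3 < n) (hx1 : 2 * π / (n + 1) ≤ x) (hx2 : x < π / 2) :
    (n / 2) * Real.log (1 - sin x ^ 2) < Real.log (1 - sin x) := by
  have hπ : (0:ℝ) < π := Real.pi_pos
  have hn1 : (0:ℝ) < n + 1 := by linarith
  have hx0 : 0 < x := lt_of_lt_of_le (by positivity) hx1
  set s : ℝ := sin x with hsdef
  have hjordan : 2 / π * x ≤ s := Real.mul_le_sin hx0.le hx2.le
  have hs0 : 0 < s := lt_of_lt_of_le (by positivity) hjordan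
  have hs1 : s < 1 := by
    have := Real.sin_lt_sin_of_lt_of_le_pi_div_two (by linarith : -(π/2) ≤ x) le_rfl hx2
    rwa [Real.sin_pi_div_two] at this
  have h4 : 4 / (n + 1) ≤ s := by
    calc 4 / (n + 1) = 2 / π * (2 * π / (n + 1)) := by field_simp; ring
    _ ≤ 2 / π * x := by
        apply mul_le_mul_of_nonneg_left hx1 (by positivity)
    _ ≤ s := hjordan
  have hsn : 4 ≤ s * (n + 1) := (div_le_iff₀ hn1).mp h4
  have h1s : (0:ℝ) < 1 - s := by linarith
  have h2s : (0:ℝ) < 1 + s := by linarith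
  set A : ℝ := Real.log (1 - s) with hAdef
  set B : ℝ := Real.log (1 + s) with hBdef
  have hA : A < 0 := Real.log_neg h1s (by linarith)
  have hB : 0 < B := Real.log_pos (by linarith)
  have hAB : Real.log (1 - s^2) = A + B := by
    rw [show (1:ℝ) - s^2 = (1 - s) * (1 + s) by ring, Real.log_mul h1s.ne' h2s.ne']
  have hABneg : A + B < 0 := by
    rw [← hAB]
    exact Real.log_neg (by nlinarith) (by nlinarith)
  have key : (4 - 3*s) * A + (4 - s) * B < 0 := key_h hs0 hs1
  have hp : (s * (n + 1) - 4) * (A + B) ≤ 0 :=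
    mul_nonpos_of_nonneg_of_nonpos (by linarith) hABneg.le
  have hmul : s * ((n - 2) * A + n * B) < 0 := by nlinarith [hp, key]
  have h5 : (n - 2) * A + n * B < 0 := by
    by_contra h
    push_neg at h
    nlinarith [mul_nonneg hs0.le h]
  rw [hAB]
  nlinarith [h5]
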